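/- arXiv:2303.00130 — 2 statements merged into one kernel-verified Lean document; each statement's English description precedes it below -/
import Mathlib

section
/- Let X be a topological space, Y a metric space, and f : X → Y continuous. Let 𝒰 = (U_i)_{i ∈ I} be a finite family of open subsets of Y covering f(X), with resolution res(𝒰) := sup_{i ∈ I} sup_{x, y ∈ U_i} d(x, y). For a subset V ⊆ Y write N(V) := ⋃_{σ ∈ K_V} U_σ, where U_σ := ⋂_{i ∈ σ} U_i and K_V := {σ : σ nonempty finite ⊆ I, U_σ ∩ V ≠ ∅}. Then for every real ε > res(𝒰), every δ ≥ 0, and every subset V ⊆ Y, the following sandwich inclusions hold on preimages: f⁻¹(V^δ) ⊆ f⁻¹(N(V^δ)) ⊆ f⁻¹(V^{δ+ε}), where V^t := {y ∈ Y : infDist(y, V) < t} for t > 0 and V^0 := V. -/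
/-- The open `t`-thickening `V^t := {y | infDist y V < t}` of a set for `t > 0`,
with the convention `V^0 := V`. -/
def thickenedSet {Y : Type*} [MetricSpace Y] (V : Set Y) (t : ℝ) : Set Y :=
  if t = 0 then V else {y : Y | Metric.infDist y V < t}

/-- The union `N(V) := ⋃ σ ∈ K_V, U_σ` of all intersections
`U_σ := ⋂ i ∈ σ, U i` (for `σ` nonempty finite) that meet `V`. -/
def nerveNbhd {Y : Type*} {I : Type*} (U : I → Set Y) (V : Set Y) : Set Y :=
  ⋃ σ ∈ {σ : Finset I | σ.Nonempty ∧ ((⋂ i ∈ σ, U i) ∩ V).Nonempty}, ⋂ i ∈ σ, U i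

/-- Let `f : X → Y` be continuous, and let `U i`, `i ∈ I`, be a
finite family of open subsets of `Y` covering `f(X)`, with resolution
`res := ⨆ i, diam (U i)` (assumed finite, i.e. each `U i` is bounded).  Then for
every real `ε > res`, every `δ ≥ 0` and every `V ⊆ Y`, the sandwich inclusions
`f⁻¹(V^δ) ⊆ f⁻¹(N(V^δ)) ⊆ f⁻¹(V^(δ+ε))` hold. -/
theorem stmt_5 {X Y : Type*} [TopologicalSpace X] [MetricSpace Y]
    (f : X → Y) (hf : Continuous f) {I : Type*} [Fintype I]
    (U : I → Set Y) (hU : ∀ i, IsOpen (U i)) (hb : ∀ i, Bornology.IsBounded (U i))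
    (hcover : Set.range f ⊆ ⋃ i, U i)
    (res : ℝ) (hres : res = ⨆ i, Metric.diam (U i)) :
    ∀ ε : ℝ, res < ε → ∀ δ : ℝ, 0 ≤ δ → ∀ V : Set Y,
      f ⁻¹' (thickenedSet V δ) ⊆ f ⁻¹' (nerveNbhd U (thickenedSet V δ)) ∧
        f ⁻¹' (nerveNbhd U (thickenedSet V δ)) ⊆ f ⁻¹' (thickenedSet V (δ + ε)) := by
  intro ε hε δ hδ V
  constructor
  · intro x hx
    simp only [Set.mem_preimage] at hx ⊢
    obtain ⟨_, ⟨i, rfl⟩, hi⟩ := hcover ⟨x, rfl⟩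
    refine Set.mem_iUnion₂.mpr ⟨{i}, ⟨Finset.singleton_nonempty i, ⟨f x, ?_, hx⟩⟩, ?_⟩
    · simp [hi]
    · simp [hi]
  · intro x hx
    simp only [Set.mem_preimage] at hx ⊢
    obtain ⟨σ, ⟨hσne, z, hz1, hz2⟩, hxσ⟩ := Set.mem_iUnion₂.mp hx
    obtain ⟨i, hi⟩ := hσne
    have hfx : f x ∈ U i := Set.mem_iInter₂.mp hxσ i hi
    have hz : z ∈ U i := Set.mem_iInter₂.mp hz1 i hi
    have hd : dist (f x) z ≤ res := by
      rw [hres]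
      exact le_trans (Metric.dist_le_diam_of_mem (hb i) hfx hz)
        (le_ciSup (f := fun j => Metric.diam (U j)) (Set.Finite.bddAbove (Set.finite_range _)) i)
    have hres0 : 0 ≤ res := le_trans dist_nonneg hd
    rw [thickenedSet, if_neg (by intro h; linarith : ¬ δ + ε = 0)]
    by_cases h0 : δ = 0
    · subst h0
      rw [thickenedSet, if_pos rfl] at hz2
      have := Metric.infDist_le_dist_of_mem hz2 (x := f x)
      simp only [Set.mem_setOf_eq]
      linarith
    · rw [thickenedSet, if_neg h0] at hz2
      have := Metric.infDist_le_infDist_add_dist (x := f x) (y := z) (s := V)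
      simp only [Set.mem_setOf_eq] at hz2 ⊢
      linarith
end

section
/- Let A ⊆ ℝ be a nonempty compact set. For every real δ > 0 there exists a finite family 𝒰 = (U_1, …, U_m) of nonempty open intervals in ℝ such that: (i) A ⊆ U_1 ∪ … ∪ U_m; (ii) the diameter of each U_i is at most δ (so res(𝒰) := sup_i sup_{x,y ∈ U_i} |x − y| ≤ δ); and (iii) the nerve of 𝒰 is one-dimensional, i.e. for any three pairwise distinct indices i, j, k one has U_i ∩ U_j ∩ U_k = ∅. In other words, compact subsets of ℝ admit finite 1D covers of arbitrarily small resolution. -/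
/-- Every nonempty compact set `A ⊆ ℝ` admits, for every `δ > 0`,
a finite cover `U_1, …, U_m` by nonempty open intervals, each of diameter at
most `δ` (so that `res 𝒰 ≤ δ`), whose nerve is one-dimensional: all triple
intersections of pairwise distinct cover elements are empty.  In other words,
compact subsets of `ℝ` admit finite 1D covers of arbitrarily small resolution. -/
theorem stmt_8 (A : Set ℝ) (hA : A.Nonempty) (hAc : IsCompact A)
    (δ : ℝ) (hδ : 0 < δ) :
    ∃ (m : ℕ) (U : Fin m → Set ℝ),
      (∀ i, ∃ a b : ℝ, a < b ∧ U i = Set.Ioo a b) ∧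
      A ⊆ ⋃ i, U i ∧
      (∀ i, ∀ x ∈ U i, ∀ y ∈ U i, |x - y| ≤ δ) ∧
      ∀ i j k : Fin m, i ≠ j → i ≠ k → j ≠ k → U i ∩ U j ∩ U k = ∅ := by
  obtain ⟨c, hcA, hc⟩ := hAc.exists_isLeast hA
  obtain ⟨d, hdA, hd⟩ := hAc.exists_isGreatest hA
  set h : ℝ := δ / 2 with hhdef
  have hh0 : 0 < h := by positivity
  set m : ℕ := (⌊(d - c) / h⌋).toNat + 1 with hm
  set U : Fin m → Set ℝ :=
    fun i => Set.Ioo (c + ((i : ℕ) - 1 : ℝ) * h) (c + ((i : ℕ) + 1 : ℝ) * h) with hU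
  have key : ∀ a b : Fin m, (a : ℕ) + 2 ≤ (b : ℕ) → ∀ x, x ∈ U a → x ∈ U b → False := by
    intro a b hab x hxa hxb
    simp only [hU, Set.mem_Ioo] at hxa hxb
    have : ((a : ℕ) : ℝ) + 2 ≤ ((b : ℕ) : ℝ) := by exact_mod_cast hab
    nlinarith [hxa.2, hxb.1]
  refine ⟨m, U, ?_, ?_, ?_, ?_⟩
  · intro i
    exact ⟨_, _, by nlinarith, rfl⟩
  · intro x hx
    have hcx : c ≤ x := hc hx
    have hxd : x ≤ d := hd hx
    have hnn : 0 ≤ (x - c) / h := div_nonneg (by linarith) hh0.le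
    have h0 : (0 : ℤ) ≤ ⌊(x - c) / h⌋ := Int.floor_nonneg.2 hnn
    set n : ℕ := (⌊(x - c) / h⌋).toNat with hn
    have hlt : n < m := by
      have hle : ⌊(x - c) / h⌋ ≤ ⌊(d - c) / h⌋ := by
        apply Int.floor_le_floor
        gcongr
      omega
    refine Set.mem_iUnion.2 ⟨⟨n, hlt⟩, ?_⟩
    have hcast : ((n : ℕ) : ℝ) = (⌊(x - c) / h⌋ : ℝ) := by
      rw [hn]; exact_mod_cast congrArg (Int.cast : ℤ → ℝ) (Int.toNat_of_nonneg h0)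
    have h1 : ((n : ℕ) : ℝ) ≤ (x - c) / h := by
      rw [hcast]; exact Int.floor_le _
    have h2 : (x - c) / h < (n : ℝ) + 1 := by
      rw [hcast]; exact Int.lt_floor_add_one _
    simp only [hU, Set.mem_Ioo]
    have hx1 : (n : ℝ) * h ≤ x - c := (le_div_iff₀ hh0).mp h1
    have hx2 : x - c < ((n : ℝ) + 1) * h := (div_lt_iff₀ hh0).mp h2
    constructor <;> nlinarith
  · intro i x hx y hy
    simp only [hU, Set.mem_Ioo] at hx hy
    rw [abs_sub_le_iff]
    constructor <;> nlinarith
  · intro i j k hij hik hjk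
    have h1 : (i : ℕ) ≠ (j : ℕ) := fun h' => hij (Fin.ext h')
    have h2 : (i : ℕ) ≠ (k : ℕ) := fun h' => hik (Fin.ext h')
    have h3 : (j : ℕ) ≠ (k : ℕ) := fun h' => hjk (Fin.ext h')
    rw [Set.eq_empty_iff_forall_notMem]
    rintro x ⟨⟨hxi, hxj⟩, hxk⟩
    have : (i : ℕ) + 2 ≤ (j : ℕ) ∨ (j : ℕ) + 2 ≤ (i : ℕ) ∨ (i : ℕ) + 2 ≤ (k : ℕ) ∨
        (k : ℕ) + 2 ≤ (i : ℕ) ∨ (j : ℕ) + 2 ≤ (k : ℕ) ∨ (k : ℕ) + 2 ≤ (j : ℕ) := by omega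
    rcases this with h' | h' | h' | h' | h' | h'
    · exact key i j h' x hxi hxj
    · exact key j i h' x hxj hxi
    · exact key i k h' x hxi hxk
    · exact key k i h' x hxk hxi
    · exact key j k h' x hxj hxk
    · exact key k j h' x hxk hxj
end
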